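/- Let D be a strongly connected digraph on n vertices, not a directed cycle, such that for every pair of non-adjacent vertices x, y that have a common out-neighbour or a common in-neighbour, one has min{d⁺(x)+d⁻(y), d⁻(x)+d⁺(y)} ≥ n−1 and d(x)+d(y) ≥ 2n−1. Suppose D contains no cycle of length n−1 and no cycle of length n−2, let C := x₁x₂…x_m x₁ be a longest non-Hamiltonian cycle of D, and suppose P := u₁u₂…u_s is a C-bypass with u₁ = x₁, u_s = x₂ of minimum possible gap (namely gap 1) and minimal length among such bypasses, whose internal vertices comprise all of R := V(D) − V(C). Then s ≥ 5, and moreover x₁u_{s−1} ∉ A(D), u₂x₂ ∉ A(D), neither x_{m−1}u₂ nor x_m u₂ is an arc of D, and neither u_{s−1}x₃ nor u_{s−1}x₄ is an arc of D. -/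
import Mathlib


variable {V : Type*}

/-- Rotate an index of `Fin m` forward by `k` steps (indices mod `m`). -/
def finRot {m : ℕ} (i : Fin m) (k : ℕ) : Fin m :=
  ⟨(i.val + k) % m, Nat.mod_lt _ (Nat.lt_of_le_of_lt (Nat.zero_le i.val) i.isLt)⟩

/-- `c : Fin k → V` is a directed cycle of length `k`: distinct vertices with an
arc from each vertex to the next one (cyclically). -/
def IsCycle (A : V → V → Prop) {k : ℕ} (c : Fin k → V) : Prop :=
  Function.Injective c ∧ ∀ i, A (c i) (c (finRot i 1))

/-- Out-degree of `x`. -/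
def outDeg [Fintype V] (A : V → V → Prop) [DecidableRel A] (x : V) : ℕ :=
  (Finset.univ.filter fun y => A x y).card

/-- In-degree of `x`. -/
def inDeg [Fintype V] (A : V → V → Prop) [DecidableRel A] (x : V) : ℕ :=
  (Finset.univ.filter fun y => A y x).card

/-- Degree of `x`. -/
def deg [Fintype V] (A : V → V → Prop) [DecidableRel A] (x : V) : ℕ :=
  outDeg A x + inDeg A x

/-- Out-degree of `x` into the set `S`. -/
def outDegOn (A : V → V → Prop) [DecidableRel A] (x : V) (S : Finset V) : ℕ :=
  (S.filter fun y => A x y).card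

/-- In-degree of `x` from the set `S`. -/
def inDegOn (A : V → V → Prop) [DecidableRel A] (x : V) (S : Finset V) : ℕ :=
  (S.filter fun y => A y x).card

/-- Degree of `x` with respect to the set `S`. -/
def degOn (A : V → V → Prop) [DecidableRel A] (x : V) (S : Finset V) : ℕ :=
  outDegOn A x S + inDegOn A x S

/-- The set of indices of the subpath of a cycle on `Fin m` that goes from
index `β` to index `α` (inclusive), following the orientation of the cycle. -/
def cycSeg {m : ℕ} (β α : Fin m) : Finset (Fin m) :=
  (Finset.range ((α.val + m - β.val) % m + 1)).image (finRot β)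

lemma finRot_finRot {m : ℕ} (i : Fin m) (a b : ℕ) :
    finRot (finRot i a) b = finRot i (a + b) := by
  apply Fin.ext
  simp only [finRot]
  rw [Nat.mod_add_mod, Nat.add_assoc]

lemma finRot_zero {m : ℕ} (i : Fin m) : finRot i 0 = i := by
  apply Fin.ext
  simp [finRot, Nat.mod_eq_of_lt i.isLt]

lemma finRot_self {m : ℕ} (i : Fin m) : finRot i m = i := by
  apply Fin.ext
  simp [finRot, Nat.add_mod_right, Nat.mod_eq_of_lt i.isLt]

lemma finRot_inj {m : ℕ} (i : Fin m) {a b : ℕ} (ha : a < m) (hb : b < m)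
    (h : finRot i a = finRot i b) : a = b := by
  have h0 : (i.val + a) % m = (i.val + b) % m := congrArg Fin.val h
  have h1 : a ≡ b [MOD m] := Nat.ModEq.add_left_cancel (Nat.ModEq.refl i.val) h0
  have h2 : a % m = b % m := h1
  rwa [Nat.mod_eq_of_lt ha, Nat.mod_eq_of_lt hb] at h2

lemma build_cycle (A : V → V → Prop)
    {m : ℕ} (c : Fin m → V) (hc : IsCycle A c)
    {s : ℕ} (hs : 3 ≤ s) (u : Fin s → V)
    (huinj : Function.Injective u)
    (hupath : ∀ i j : Fin s, (j : ℕ) = (i : ℕ) + 1 → A (u i) (u j))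
    (hnotC : ∀ t : Fin s, 0 < (t : ℕ) → (t : ℕ) < s - 1 → ∀ i : Fin m, u t ≠ c i)
    (α : Fin m) (ℓ : ℕ) (hℓ1 : 1 ≤ ℓ) (hℓm : ℓ ≤ m)
    (k : ℕ) (hk : k = ℓ + (s - 2))
    (hj1 : A (c (finRot α (ℓ - 1))) (u ⟨1, by omega⟩))
    (hj2 : A (u ⟨s - 2, by omega⟩) (c α)) :
    ∃ d : Fin k → V, IsCycle A d := by
  classical
  let d : Fin k → V := fun i =>
    if h : i.val < ℓ then c (finRot α i.val)
    else u ⟨i.val - ℓ + 1, by have := i.isLt; omega⟩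
  have hd1 : ∀ (i : Fin k), i.val < ℓ → d i = c (finRot α i.val) :=
    fun i h => dif_pos h
  have hd2 : ∀ (i : Fin k) (h : ℓ ≤ i.val) (p : i.val - ℓ + 1 < s),
      d i = u ⟨i.val - ℓ + 1, p⟩ :=
    fun i h p => dif_neg (by omega)
  refine ⟨d, ?_, ?_⟩
  · intro i j hij
    by_cases hi : i.val < ℓ <;> by_cases hj : j.val < ℓ
    · rw [hd1 i hi, hd1 j hj] at hij
      have := finRot_inj α (by omega) (by omega) (hc.1 hij)
      exact Fin.ext this
    · rw [hd1 i hi, hd2 j (by omega) (by have := j.isLt; omega)] at hij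
      exact absurd hij.symm
        (hnotC _ (by simp) (by have := j.isLt; simp; omega) _)
    · rw [hd2 i (by omega) (by have := i.isLt; omega), hd1 j hj] at hij
      exact absurd hij (hnotC _ (by simp) (by have := i.isLt; simp; omega) _)
    · rw [hd2 i (by omega) (by have := i.isLt; omega),
        hd2 j (by omega) (by have := j.isLt; omega)] at hij
      have := congrArg Fin.val (huinj hij)
      simp only [Fin.val_mk] at this
      exact Fin.ext (by omega)
  · intro i
    have hiv := i.isLt
    by_cases hlast : i.val + 1 = k
    · have e1 : d i = u ⟨s - 2, by omega⟩ := by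
        rw [hd2 i (by omega) (by omega)]
        exact congrArg u (Fin.ext (by simp only [Fin.val_mk]; omega))
      have h0 : finRot i 1 = (⟨0, by omega⟩ : Fin k) := by
        apply Fin.ext
        show (i.val + 1) % k = 0
        rw [hlast, Nat.mod_self]
      have e2 : d (finRot i 1) = c α := by
        rw [h0, hd1 _ (by simp only [Fin.val_mk]; omega)]
        simp only [Fin.val_mk]
        rw [finRot_zero]
      rw [e1, e2]
      exact hj2
    · have h0 : finRot i 1 = (⟨i.val + 1, by omega⟩ : Fin k) := by
        apply Fin.ext
        show (i.val + 1) % k = i.val + 1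
        exact Nat.mod_eq_of_lt (by omega)
      rw [h0]
      by_cases hi : i.val + 1 < ℓ
      · rw [hd1 i (by omega), hd1 _ (by simp only [Fin.val_mk]; omega)]
        have := hc.2 (finRot α i.val)
        rwa [finRot_finRot] at this
      · by_cases hi2 : i.val + 1 = ℓ
        · have e1 : d i = c (finRot α (ℓ - 1)) := by
            rw [hd1 i (by omega)]
            congr 1
            congr 1
            omega
          have e2 : d ⟨i.val + 1, by omega⟩ = u ⟨1, by omega⟩ := by
            rw [hd2 _ (by simp only [Fin.val_mk]; omega) (by simp only [Fin.val_mk]; omega)]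
            exact congrArg u (Fin.ext (by simp only [Fin.val_mk]; omega))
          rw [e1, e2]
          exact hj1
        · rw [hd2 i (by omega) (by omega),
            hd2 _ (by simp only [Fin.val_mk]; omega) (by simp only [Fin.val_mk]; omega)]
          exact hupath _ _ (by simp only [Fin.val_mk]; omega)

lemma three_path {m : ℕ} (A : V → V → Prop) (c : Fin m → V)
    (hcinj : Function.Injective c) (hm3 : 3 ≤ m) (j : Fin m) (w : V)
    (hw : ∀ i : Fin m, w ≠ c i)
    (ha1 : A (c j) w) (ha2 : A w (c (finRot j 1))) :
    ∃ u' : Fin 3 → V, Function.Injective u' ∧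
      (∀ i i' : Fin 3, (i' : ℕ) = (i : ℕ) + 1 → A (u' i) (u' i')) ∧
      u' ⟨0, by omega⟩ = c j ∧ u' ⟨3 - 1, by omega⟩ = c (finRot j 1) ∧
      (∀ t : Fin 3, 0 < (t : ℕ) → (t : ℕ) < 3 - 1 → ∀ i : Fin m, u' t ≠ c i) := by
  have hne : j ≠ finRot j 1 := by
    intro h
    have h0 : j.val = (j.val + 1) % m := congrArg Fin.val h
    by_cases h1 : j.val + 1 < m
    · rw [Nat.mod_eq_of_lt h1] at h0; omega
    · have h2 : j.val + 1 = m := by have := j.isLt; omega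
      rw [h2, Nat.mod_self] at h0; omega
  refine ⟨![c j, w, c (finRot j 1)], ?_, ?_, rfl, rfl, ?_⟩
  · intro a b hab
    fin_cases a <;> fin_cases b <;>
      first
        | rfl
        | exact absurd hab (Ne.symm (hw j))
        | exact absurd hab (Ne.symm (hw (finRot j 1)))
        | exact absurd hab (hw j)
        | exact absurd hab (hw (finRot j 1))
        | exact absurd (hcinj hab) hne
        | exact absurd (hcinj hab) (Ne.symm hne)
  · intro a b hab
    fin_cases a <;> fin_cases b <;> simp_all
  · intro t h1 h2 i
    fin_cases t <;> simp_all

/-- Under the hypotheses of the main theorem, with `C = x₁…x_m x₁`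
a longest non-Hamiltonian cycle (so `3 ≤ m ≤ n-3`) and `P = u₁u₂…u_s` a `C`-bypass
with `u₁ = x₁`, `u_s = x₂` (hence of the minimum possible gap, namely gap `1`), of
minimal length among `C`-bypasses of gap `1`, whose internal vertices comprise all of
`R = V(D) - V(C)`: then `s ≥ 5`, `x₁u_{s-1} ∉ A(D)`, `u₂x₂ ∉ A(D)`,
`x_{m-1}u₂, x_m u₂ ∉ A(D)`, and `u_{s-1}x₃, u_{s-1}x₄ ∉ A(D)`. -/
theorem bypass_properties_gap_one
    [Fintype V] [DecidableEq V] (A : V → V → Prop) [DecidableRel A]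
    (hirr : ∀ v : V, ¬ A v v)
    (n : ℕ) (hn : n = Fintype.card V)
    (hstrong : ∀ u v : V, u ≠ v → Relation.TransGen A u v)
    (hnotdircycle : ¬ ∃ c : Fin n → V, Function.Bijective c ∧
      ∀ x y : V, A x y ↔ ∃ i : Fin n, x = c i ∧ y = c (finRot i 1))
    (hcond : ∀ x y : V, x ≠ y → ¬ A x y → ¬ A y x →
      (∃ z : V, (A x z ∧ A y z) ∨ (A z x ∧ A z y)) →
      n - 1 ≤ min (outDeg A x + inDeg A y) (inDeg A x + outDeg A y) ∧
      2 * n - 1 ≤ deg A x + deg A y)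
    (hno1 : ¬ ∃ c : Fin (n - 1) → V, IsCycle A c)
    (hno2 : ¬ ∃ c : Fin (n - 2) → V, IsCycle A c)
    (m : ℕ) (hm3 : 3 ≤ m) (hmn : m ≤ n - 3)
    (c : Fin m → V) (hc : IsCycle A c)
    (hlongest : ∀ (k : ℕ) (d : Fin k → V), k < n → IsCycle A d → k ≤ m)
    (R : Finset V) (hR : R = Finset.univ \ Finset.image c Finset.univ)
    -- the bypass `P = u₁u₂…u_s` with `u₁ = x₁` and `u_s = x₂` (gap 1):
    (s : ℕ) (hs : 3 ≤ s) (u : Fin s → V)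
    (huinj : Function.Injective u)
    (hupath : ∀ i j : Fin s, (j : ℕ) = (i : ℕ) + 1 → A (u i) (u j))
    (hu1 : u ⟨0, by omega⟩ = c ⟨0, by omega⟩)
    (hus : u ⟨s - 1, by omega⟩ = c (finRot ⟨0, by omega⟩ 1))
    -- the internal vertices of `P` comprise all of `R`:
    (hint : ∀ v : V, v ∈ R ↔ ∃ t : Fin s, 0 < (t : ℕ) ∧ (t : ℕ) < s - 1 ∧ u t = v)
    -- `P` has minimal length among all `C`-bypasses of gap `1`:
    (hmin : ∀ (s' : ℕ) (_ : 3 ≤ s') (u' : Fin s' → V) (j : Fin m),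
      Function.Injective u' →
      (∀ i i' : Fin s', (i' : ℕ) = (i : ℕ) + 1 → A (u' i) (u' i')) →
      u' ⟨0, by omega⟩ = c j →
      u' ⟨s' - 1, by omega⟩ = c (finRot j 1) →
      (∀ t : Fin s', 0 < (t : ℕ) → (t : ℕ) < s' - 1 → ∀ i : Fin m, u' t ≠ c i) →
      s ≤ s') :
    5 ≤ s ∧
    ¬ A (c ⟨0, by omega⟩) (u ⟨s - 2, by omega⟩) ∧
    ¬ A (u ⟨1, by omega⟩) (c (finRot ⟨0, by omega⟩ 1)) ∧
    ¬ A (c (finRot ⟨0, by omega⟩ (m - 2))) (u ⟨1, by omega⟩) ∧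
    ¬ A (c (finRot ⟨0, by omega⟩ (m - 1))) (u ⟨1, by omega⟩) ∧
    ¬ A (u ⟨s - 2, by omega⟩) (c (finRot ⟨0, by omega⟩ 2)) ∧
    ¬ A (u ⟨s - 2, by omega⟩) (c (finRot ⟨0, by omega⟩ 3)) := by
  
  have hm0 : 0 < m := by omega
  have hcinj : Function.Injective c := hc.1
  -- internal vertices of P are not on C
  have hnotC : ∀ t : Fin s, 0 < (t : ℕ) → (t : ℕ) < s - 1 → ∀ i : Fin m, u t ≠ c i := by
    intro t h1 h2 i heq
    have hmem : u t ∈ R := (hint (u t)).2 ⟨t, h1, h2, rfl⟩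
    rw [hR, Finset.mem_sdiff] at hmem
    exact hmem.2 (Finset.mem_image.2 ⟨i, Finset.mem_univ i, heq.symm⟩)
  -- cardinality computations
  have hRcard : R.card = n - m := by
    rw [hR, Finset.card_sdiff_of_subset (Finset.subset_univ _), Finset.card_univ,
      Finset.card_image_of_injective _ hcinj, Finset.card_univ, Fintype.card_fin, hn]
  have hRcard2 : R.card = s - 2 := by
    have hRim : R = Finset.image u
        (Finset.univ.filter fun t : Fin s => 0 < (t : ℕ) ∧ (t : ℕ) < s - 1) := by
      ext v
      rw [hint v]
      simp only [Finset.mem_image, Finset.mem_filter, Finset.mem_univ, true_and]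
      constructor
      · rintro ⟨t, h1, h2, h3⟩; exact ⟨t, ⟨h1, h2⟩, h3⟩
      · rintro ⟨t, ⟨h1, h2⟩, h3⟩; exact ⟨t, h1, h2, h3⟩
    rw [hRim, Finset.card_image_of_injective _ huinj]
    apply Finset.card_eq_of_bijective (fun i hi => (⟨i + 1, by omega⟩ : Fin s))
    · intro a ha
      simp only [Finset.mem_filter, Finset.mem_univ, true_and] at ha
      refine ⟨(a : ℕ) - 1, by omega, Fin.ext ?_⟩
      simp only [Fin.val_mk]
      omega
    · intro i hi
      simp only [Finset.mem_filter, Finset.mem_univ, true_and, Fin.val_mk]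
      omega
    · intro i j hi hj hij
      have := congrArg Fin.val hij
      simp only [Fin.val_mk] at this
      omega
  have hsm : s - 2 = n - m := by omega
  have hs5 : 5 ≤ s := by omega
  -- the arc u_{s-1} -> x_2 along P, restated
  have harc_last : A (u ⟨s - 2, by omega⟩) (c (finRot ⟨0, hm0⟩ 1)) := by
    have := hupath ⟨s - 2, by omega⟩ ⟨s - 1, by omega⟩ (show s - 1 = s - 2 + 1 by omega)
    rwa [hus] at this
  have harc_first : A (c ⟨0, hm0⟩) (u ⟨1, by omega⟩) := by
    have := hupath ⟨0, by omega⟩ ⟨1, by omega⟩ (show (1 : ℕ) = 0 + 1 by omega)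
    rwa [hu1] at this
  refine ⟨hs5, ?_, ?_, ?_, ?_, ?_, ?_⟩
  · -- ¬ A x₁ u_{s-1}
    intro harc
    obtain ⟨u', hinj, hpath, h0, h2, hintl⟩ :=
      three_path A c hcinj hm3 ⟨0, hm0⟩ (u ⟨s - 2, by omega⟩)
        (fun i => hnotC ⟨s - 2, by omega⟩ (by simp; omega) (by simp; omega) i)
        harc harc_last
    have := hmin 3 (by omega) u' ⟨0, hm0⟩ hinj hpath h0 h2 hintl
    omega
  · -- ¬ A u₂ x₂
    intro harc
    obtain ⟨u', hinj, hpath, h0, h2, hintl⟩ :=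
      three_path A c hcinj hm3 ⟨0, hm0⟩ (u ⟨1, by omega⟩)
        (fun i => hnotC ⟨1, by omega⟩ (by simp) (by simp; omega) i)
        harc_first harc
    have := hmin 3 (by omega) u' ⟨0, hm0⟩ hinj hpath h0 h2 hintl
    omega
  · -- ¬ A x_{m-1} u₂
    intro harc
    refine hno2 (build_cycle A c hc hs u huinj hupath hnotC
      (finRot ⟨0, hm0⟩ 1) (m - 2) (by omega) (by omega) (n - 2) (by omega) ?_ ?_)
    · rw [finRot_finRot, show 1 + (m - 2 - 1) = m - 2 by omega]
      exact harc
    · exact harc_last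
  · -- ¬ A x_m u₂
    intro harc
    refine hno1 (build_cycle A c hc hs u huinj hupath hnotC
      (finRot ⟨0, hm0⟩ 1) (m - 1) (by omega) (by omega) (n - 1) (by omega) ?_ ?_)
    · rw [finRot_finRot, show 1 + (m - 1 - 1) = m - 1 by omega]
      exact harc
    · exact harc_last
  · -- ¬ A u_{s-1} x₃
    intro harc
    refine hno1 (build_cycle A c hc hs u huinj hupath hnotC
      (finRot ⟨0, hm0⟩ 2) (m - 1) (by omega) (by omega) (n - 1) (by omega) ?_ ?_)
    · rw [finRot_finRot, show 2 + (m - 1 - 1) = m by omega, finRot_self]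
      exact harc_first
    · exact harc
  · -- ¬ A u_{s-1} x₄
    intro harc
    refine hno2 (build_cycle A c hc hs u huinj hupath hnotC
      (finRot ⟨0, hm0⟩ 3) (m - 2) (by omega) (by omega) (n - 2) (by omega) ?_ ?_)
    · rw [finRot_finRot, show 3 + (m - 2 - 1) = m by omega, finRot_self]
      exact harc_first
    · exact harc
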